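/- Let G be a graph and w=(w_0,...,w_l) ∈ ℤ⁺ × ℕ^l with w_0 ≥ ... ≥ w_l. If G' is a spanning subgraph of G with minimum degree δ' ≥ w_l / l, then γ_w(G) ≤ γ_w(G'). -/

import Mathlib

open scoped Classical
open Finset SimpleGraph

/-- A `w`-dominating function: `f : V → {0,…,l}` with `f(N(v)) ≥ w_{f(v)}` for all `v`. -/
def WDom {V : Type*} [Fintype V] (G : SimpleGraph V) {l : ℕ} (w : Fin (l+1) → ℕ)
    (f : V → Fin (l+1)) : Prop :=
  ∀ v, w (f v) ≤ ∑ u, if G.Adj v u then (f u : ℕ) else 0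

/-- The `w`-domination number. -/
noncomputable def gammaW {V : Type*} [Fintype V] (G : SimpleGraph V) {l : ℕ}
    (w : Fin (l+1) → ℕ) : ℕ :=
  sInf {n | ∃ f : V → Fin (l+1), WDom G w f ∧ ∑ v, (f v : ℕ) = n}

/-- The Italian domination number `γ_I = γ_{(2,0,0)}`. -/
noncomputable def gammaI {V : Type*} [Fintype V] (G : SimpleGraph V) : ℕ :=
  gammaW G ![2,0,0]

/-- The domination number. -/
noncomputable def gamma {V : Type*} [Fintype V] (G : SimpleGraph V) : ℕ :=
  sInf {n | ∃ S : Finset V, (∀ v, v ∈ S ∨ ∃ u ∈ S, G.Adj u v) ∧ S.card = n}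

/-- The total domination number. -/
noncomputable def gammaT {V : Type*} [Fintype V] (G : SimpleGraph V) : ℕ :=
  sInf {n | ∃ S : Finset V, (∀ v, ∃ u ∈ S, G.Adj u v) ∧ S.card = n}

/-- The 2-domination number. -/
noncomputable def gamma2 {V : Type*} [Fintype V] (G : SimpleGraph V) : ℕ :=
  sInf {n | ∃ S : Finset V, (∀ v ∉ S, 2 ≤ (S.filter (fun u => G.Adj u v)).card) ∧ S.card = n}

/-- The double domination number. -/
noncomputable def gammaX2 {V : Type*} [Fintype V] (G : SimpleGraph V) : ℕ :=
  sInf {n | ∃ S : Finset V, (∀ v, 2 ≤ (S.filter (fun u => u = v ∨ G.Adj u v)).card) ∧ S.card = n}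

/-- The double total domination number. -/
noncomputable def gammaX2T {V : Type*} [Fintype V] (G : SimpleGraph V) : ℕ :=
  sInf {n | ∃ S : Finset V, (∀ v, 2 ≤ (S.filter (fun u => G.Adj u v)).card) ∧ S.card = n}

/-- The lexicographic product `G ∘ H`. -/
def lexProd {V W : Type*} (G : SimpleGraph V) (H : SimpleGraph W) : SimpleGraph (V × W) where
  Adj x y := G.Adj x.1 y.1 ∨ (x.1 = y.1 ∧ H.Adj x.2 y.2)
  symm := ⟨by
    rintro x y (h | ⟨h1, h2⟩)
    · exact Or.inl h.symm
    · exact Or.inr ⟨h1.symm, h2.symm⟩⟩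
  loopless := ⟨by
    rintro x (h | ⟨_, h⟩)
    · exact G.irrefl h
    · exact H.irrefl h⟩

theorem gammaW_le_of_spanning_subgraph {V : Type*} [Fintype V]
    (G G' : SimpleGraph V) {l : ℕ} (w : Fin (l+1) → ℕ)
    (hw : Antitone w) (h0 : 1 ≤ w 0) (hsub : G' ≤ G)
    (hdeg : (w (Fin.last l) : ℚ) / l ≤ (G'.minDegree : ℚ)) :
    gammaW G w ≤ gammaW G' w := by
  have hmono : ∀ f : V → Fin (l+1), WDom G' w f → WDom G w f := by
    intro f hf v
    refine (hf v).trans (Finset.sum_le_sum fun u _ => ?_)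
    by_cases h : G'.Adj v u
    · simp [h, hsub h]
    · simp [h]
  by_cases hV : Nonempty V
  · by_cases hl : 0 < l
    · -- constant l function dominates G'
      have hdeg' : w (Fin.last l) ≤ l * G'.minDegree := by
        have := (div_le_iff₀ (by exact_mod_cast hl : (0:ℚ) < l)).mp hdeg
        exact_mod_cast this.trans_eq (mul_comm _ _)
      have hconst : WDom G' w (fun _ => Fin.last l) := by
        intro v
        have hsum : ∑ u, (if G'.Adj v u then ((Fin.last l : Fin (l+1)) : ℕ) else 0)
            = G'.degree v * l := by
          rw [Finset.sum_ite, Finset.sum_const, Finset.sum_const_zero, add_zero,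
            SimpleGraph.degree, SimpleGraph.neighborFinset_eq_filter]
          simp [Fin.val_last, Nat.smul_one_eq_cast]
        rw [hsum]
        calc w (Fin.last l) ≤ l * G'.minDegree := hdeg'
          _ ≤ G'.degree v * l := by
              rw [mul_comm]; exact Nat.mul_le_mul_right _ (G'.minDegree_le_degree v)
      have hne : {n | ∃ f : V → Fin (l+1), WDom G' w f ∧ ∑ v, (f v : ℕ) = n}.Nonempty :=
        ⟨_, fun _ => Fin.last l, hconst, rfl⟩
      have hmem := Nat.sInf_mem hne
      obtain ⟨f, hf, hfs⟩ := hmem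
      exact Nat.sInf_le ⟨f, hmono f hf, hfs⟩
    · -- l = 0 : both sets empty, both gammas 0
      have hl0 : l = 0 := Nat.eq_zero_of_not_pos hl
      subst hl0
      have : gammaW G w = 0 := by
        have : {n | ∃ f : V → Fin 1, WDom G w f ∧ ∑ v, (f v : ℕ) = n} = ∅ := by
          ext n
          simp only [Set.mem_setOf_eq, Set.mem_empty_iff_false, iff_false]
          rintro ⟨f, hf, -⟩
          obtain ⟨v⟩ := hV
          have := hf v
          simp [Subsingleton.elim (f v) 0, Fin.val_eq_zero] at this
          omega
        rw [gammaW, this, Nat.sInf_empty]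
      omega
  · -- V empty : WDom trivial, sum 0
    have : gammaW G w ≤ 0 := by
      apply Nat.sInf_le
      refine ⟨fun _ => 0, fun v => absurd ⟨v⟩ hV, ?_⟩
      simp [Finset.sum_eq_zero]
    omega
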